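/- (Scalar majorization lemma.) Let η ≥ η* := sup_{p∈[0,1]} ψ₁(p). Then for every y ∈ {0,1} and all real u, ũ: (y − F(u))² ≤ (y − F(ũ))² + 2(F(ũ) − y)·F(ũ)(1 − F(ũ))·(u − ũ) + (η/2)(u − ũ)², with equality when u = ũ. -/

import Mathlib

/-- The logistic function `F(u) = 1/(1 + exp(-u))`. -/
noncomputable def logisticF (u : ℝ) : ℝ := 1 / (1 + Real.exp (-u))

/-- `ψ_u(p) = [2p(1−p) − (2p−1)((2p−1) − u)]·p(1−p)`. -/
def psi (u p : ℝ) : ℝ := (2*p*(1-p) - (2*p-1)*((2*p-1) - u)) * (p*(1-p))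

open Set Real

lemma logistic_pos (t : ℝ) : 0 < logisticF t := by
  unfold logisticF; positivity

lemma logistic_lt_one (t : ℝ) : logisticF t < 1 := by
  unfold logisticF
  rw [div_lt_one (by positivity)]
  nlinarith [Real.exp_pos (-t)]

lemma logistic_hasDeriv (t : ℝ) :
    HasDerivAt logisticF (logisticF t * (1 - logisticF t)) t := by
  have hd : (0:ℝ) < 1 + Real.exp (-t) := by positivity
  have h1 : HasDerivAt (fun s : ℝ => 1 + Real.exp (-s)) (-Real.exp (-t)) t := by
    have := ((Real.hasDerivAt_exp (-t)).comp t (hasDerivAt_neg t)).const_add 1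
    simpa using this
  have h2 := h1.inv (ne_of_gt hd)
  have heq : logisticF = fun s : ℝ => (1 + Real.exp (-s))⁻¹ := by
    funext s; simp [logisticF, one_div]
  rw [heq]
  convert h2 using 1 <;> try rfl
  beta_reduce
  field_simp
  ring

theorem stmt_5 (η : ℝ) (hη : sSup (psi 1 '' Set.Icc (0:ℝ) 1) ≤ η)
    (y : ℝ) (hy : y = 0 ∨ y = 1) (u v : ℝ) :
    (y - logisticF u)^2 ≤
      (y - logisticF v)^2
        + 2 * (logisticF v - y) * (logisticF v * (1 - logisticF v)) * (u - v)
        + (η/2) * (u - v)^2 ∧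
    (y - logisticF v)^2 =
      (y - logisticF v)^2
        + 2 * (logisticF v - y) * (logisticF v * (1 - logisticF v)) * (v - v)
        + (η/2) * (v - v)^2 := by
  refine ⟨?_, by ring⟩
  set L : ℝ → ℝ := logisticF with hLdef
  set φ : ℝ → ℝ := fun t => 2 * (L t - y) * (L t * (1 - L t)) with hφdef
  set k : ℝ → ℝ := fun t => (η/2) * t^2 - (y - L t)^2 with hkdef
  -- first derivative of k
  have hk' : ∀ t, HasDerivAt k (η * t - φ t) t := by
    intro t
    have h1 : HasDerivAt (fun s : ℝ => (η/2) * s^2) (η * t) t := by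
      have := (hasDerivAt_pow 2 t).const_mul (η/2)
      convert this using 1 <;> try rfl
      push_cast; ring
    have h2 : HasDerivAt (fun s : ℝ => (y - L s)^2) (φ t) t := by
      have := ((logistic_hasDeriv t).const_sub y).pow 2
      convert this using 1 <;> try rfl
      simp [hφdef]; ring
    exact h1.sub h2
  -- second derivative of k
  have hφ' : ∀ t, HasDerivAt φ
      (2 * (L t * (1 - L t)) * ((L t * (1 - L t)) + (L t - y) * (1 - 2 * L t))) t := by
    intro t
    have hL := logistic_hasDeriv t
    have h1 : HasDerivAt (fun s : ℝ => 2 * (L s - y)) (2 * (L t * (1 - L t))) t :=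
      (hL.sub_const y).const_mul 2
    have h2 : HasDerivAt (fun s : ℝ => L s * (1 - L s))
        ((L t * (1 - L t)) * (1 - L t) + L t * (-(L t * (1 - L t)))) t :=
      hL.mul (hL.const_sub 1)
    have := h1.mul h2
    convert this using 1 <;> try rfl
    ring
  -- bound on second derivative
  have hcont : Continuous (psi 1) := by unfold psi; continuity
  have hbdd : BddAbove (psi 1 '' Set.Icc (0:ℝ) 1) :=
    (isCompact_Icc.image hcont).bddAbove
  have hbound : ∀ t, 2 * (L t * (1 - L t)) * ((L t * (1 - L t)) + (L t - y) * (1 - 2 * L t)) ≤ η := by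
    intro t
    have h0 := logistic_pos t
    have h1 := logistic_lt_one t
    have key : ∀ q ∈ Set.Icc (0:ℝ) 1, psi 1 q ≤ η :=
      fun q hq => le_trans (le_csSup hbdd ⟨q, hq, rfl⟩) hη
    rcases hy with hy | hy
    · have := key (1 - L t) ⟨by linarith, by linarith⟩
      calc 2 * (L t * (1 - L t)) * ((L t * (1 - L t)) + (L t - y) * (1 - 2 * L t))
          = psi 1 (1 - L t) := by subst hy; unfold psi; ring
        _ ≤ η := this
    · have := key (L t) ⟨by linarith, by linarith⟩
      calc 2 * (L t * (1 - L t)) * ((L t * (1 - L t)) + (L t - y) * (1 - 2 * L t))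
          = psi 1 (L t) := by subst hy; unfold psi; ring
        _ ≤ η := this
  -- convexity of k
  have hkdiff : Differentiable ℝ k := fun t => (hk' t).differentiableAt
  have hderiv_eq : deriv k = fun t => η * t - φ t := funext fun t => (hk' t).deriv
  have hk'' : ∀ t, HasDerivAt (deriv k)
      (η - 2 * (L t * (1 - L t)) * ((L t * (1 - L t)) + (L t - y) * (1 - 2 * L t))) t := by
    rw [hderiv_eq]
    intro t
    have h1 : HasDerivAt (fun s : ℝ => η * s) η t := by
      simpa using (hasDerivAt_id t).const_mul η
    exact h1.sub (hφ' t)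
  have hconv : ConvexOn ℝ Set.univ k := by
    apply convexOn_univ_of_deriv2_nonneg hkdiff
      (fun t => (hk'' t).differentiableAt)
    intro x
    rw [Function.iterate_succ, Function.iterate_one, Function.comp_apply, (hk'' x).deriv]
    linarith [hbound x]
  -- tangent line inequality: k v + (η*v - φ v)*(u - v) ≤ k u
  have tangent : k v + (η * v - φ v) * (u - v) ≤ k u := by
    rcases lt_trichotomy u v with h | h | h
    · have hs := hconv.slope_le_of_hasDerivAt (mem_univ u) (mem_univ v) h (hk' v)
      rw [slope_def_field] at hs
      have hvu : 0 < v - u := by linarith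
      rw [div_le_iff₀ hvu] at hs
      nlinarith
    · subst h; simp
    · have hs := hconv.le_slope_of_hasDerivAt (mem_univ v) (mem_univ u) h (hk' v)
      rw [slope_def_field] at hs
      have hvu : 0 < u - v := by linarith
      rw [le_div_iff₀ hvu] at hs
      nlinarith
  -- unfold and conclude
  have : (η/2) * v^2 - (y - L v)^2 + (η * v - 2 * (L v - y) * (L v * (1 - L v))) * (u - v)
      ≤ (η/2) * u^2 - (y - L u)^2 := tangent
  nlinarith [this]
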